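/- An infinite virtually cyclic group V is of type I if and only if the center of V is infinite. -/

import Mathlib

/-- A group is virtually cyclic if it contains a cyclic subgroup of finite index. -/
def VirtuallyCyclic (G : Type*) [Group G] : Prop :=
  ∃ H : Subgroup G, IsCyclic ↥H ∧ H.FiniteIndex

/-- An infinite virtually cyclic group is of type I if it admits a surjective
homomorphism onto the infinite cyclic group ℤ. -/
def IsTypeI (G : Type*) [Group G] : Prop :=
  ∃ f : G →* Multiplicative ℤ, Function.Surjective f

/-- An infinite virtually cyclic group is of type II if it admits a surjective
homomorphism onto the infinite dihedral group D∞. -/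
def IsTypeII (G : Type*) [Group G] : Prop :=
  ∃ f : G →* DihedralGroup 0, Function.Surjective f

open Subgroup
open scoped commutatorElement
open scoped IsMulCommutative

/-- In an infinite group, a finite-index subgroup is infinite. -/
lemma auxInfiniteSubgroup {G : Type*} [Group G] [Infinite G] (H : Subgroup G)
    [H.FiniteIndex] : Infinite H := by
  by_contra h
  rw [not_infinite_iff_finite] at h
  have h1 : Nat.card H ≠ 0 := Nat.card_pos.ne'
  have h2 : H.index ≠ 0 := FiniteIndex.index_ne_zero
  have h3 := H.card_mul_index
  rw [(Nat.card_eq_zero_of_infinite : Nat.card G = 0)] at h3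
  exact absurd h3 (mul_ne_zero h1 h2)

/-- An infinite subgroup of a cyclic group has finite index. -/
lemma auxCyclicFiniteIndex {G : Type*} [Group G] [IsCyclic G] (S : Subgroup G)
    [Infinite S] : S.FiniteIndex := by
  obtain ⟨g, hg⟩ := IsCyclic.exists_generator (α := G)
  have : Nontrivial S := inferInstance
  obtain ⟨s, hs1⟩ := exists_ne (1 : S)
  obtain ⟨m, hm⟩ := hg (s : G)
  have hm0 : m ≠ 0 := by
    rintro rfl
    apply hs1
    ext
    simpa using hm.symm
  set d : ℕ := m.natAbs with hd
  have hd0 : 0 < d := Int.natAbs_pos.mpr hm0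
  have hgd : g ^ (d : ℤ) ∈ S := by
    rcases Int.natAbs_eq m with h | h
    · rw [← h]; simp only at hm; rw [hm]; exact s.2
    · have : g ^ (-(d : ℤ)) ∈ S := by rw [← h]; simp only at hm; rw [hm]; exact s.2
      simpa using S.inv_mem this
  have : Finite (G ⧸ S) := by
    apply Finite.of_surjective (fun i : Fin d => QuotientGroup.mk (g ^ (i : ℕ)))
    intro q
    induction q using QuotientGroup.induction_on with
    | H x =>
      obtain ⟨k, hk⟩ := hg x
      have hdz : (d : ℤ) ≠ 0 := Int.natCast_ne_zero.mpr hd0.ne'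
      set r : ℤ := k % (d : ℤ) with hr
      have hr0 : 0 ≤ r := Int.emod_nonneg k hdz
      have hrd : r < (d : ℤ) := Int.emod_lt_of_pos k (by exact_mod_cast hd0)
      refine ⟨⟨r.toNat, by omega⟩, ?_⟩
      rw [QuotientGroup.eq]
      have h1 : (g ^ ((⟨r.toNat, by omega⟩ : Fin d) : ℕ))⁻¹ * x
          = g ^ (k - r) := by
        rw [← hk, ← zpow_natCast, ← zpow_neg, ← zpow_add]
        congr 1
        simp
        omega
      rw [h1]
      have h2 : k - r = (d : ℤ) * (k / (d : ℤ)) := by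
        have := Int.mul_ediv_add_emod k (d : ℤ)
        omega
      rw [h2, zpow_mul]
      exact S.zpow_mem hgd _
  exact S.finiteIndex_of_finite_quotient

/-- An infinite subgroup of an infinite virtually cyclic group has finite index. -/
lemma auxVCFiniteIndex {V : Type*} [Group V] [Infinite V] (hV : VirtuallyCyclic V)
    (K : Subgroup V) [Infinite K] : K.FiniteIndex := by
  obtain ⟨H, hHc, hHfi⟩ := hV
  haveI := hHfi
  haveI := hHc
  haveI hKH1 : Infinite ((H.subgroupOf K) : Subgroup K) := auxInfiniteSubgroup _
  haveI hinf2 : Infinite ((H ⊓ K).subgroupOf K : Subgroup K) := by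
    rwa [inf_subgroupOf_right]
  haveI hinfHK : Infinite (H ⊓ K : Subgroup V) :=
    ((subgroupOfEquivOfLe (inf_le_right : H ⊓ K ≤ K)).toEquiv.infinite_iff).mp hinf2
  haveI hinfKH : Infinite (K ⊓ H : Subgroup V) := by rwa [inf_comm] at hinfHK
  haveI hinf3 : Infinite ((K ⊓ H).subgroupOf H : Subgroup H) :=
    ((subgroupOfEquivOfLe (inf_le_right : K ⊓ H ≤ H)).toEquiv.infinite_iff).mpr hinfKH
  haveI h4 : ((K ⊓ H).subgroupOf H).FiniteIndex := auxCyclicFiniteIndex _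
  have h5 : (K ⊓ H).relIndex H * H.index = (K ⊓ H).index :=
    relIndex_mul_index inf_le_right
  have h6 : (K ⊓ H).index ≠ 0 := by
    rw [← h5]
    exact mul_ne_zero h4.index_ne_zero hHfi.index_ne_zero
  haveI h7 : (K ⊓ H).FiniteIndex := ⟨h6⟩
  exact finiteIndex_of_le (inf_le_left : K ⊓ H ≤ K)

/-- A group with a finitely generated subgroup of finite index is finitely generated. -/
lemma auxFGofFiniteIndex {G : Type*} [Group G] (H : Subgroup G) [H.FiniteIndex]
    (hH : Group.FG ↥H) : Group.FG G := by
  obtain ⟨S, hS⟩ := (Group.fg_iff_subgroup_fg H).mp hH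
  have : Finite (G ⧸ H) := H.finite_quotient_of_finiteIndex
  let T : Set G := Set.range (fun q : G ⧸ H => q.out)
  have hTfin : T.Finite := Set.finite_range _
  refine Group.fg_iff.mpr ⟨(S : Set G) ∪ T, ?_, (S.finite_toSet).union hTfin⟩
  rw [eq_top_iff]
  intro g _
  set t : G := (QuotientGroup.mk g : G ⧸ H).out with hts
  have ht : QuotientGroup.mk t = (QuotientGroup.mk g : G ⧸ H) := Quotient.out_eq _
  have hmem : t⁻¹ * g ∈ H := by rwa [QuotientGroup.eq] at ht
  have h1 : t ∈ closure ((S : Set G) ∪ T) :=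
    subset_closure (Or.inr ⟨QuotientGroup.mk g, rfl⟩)
  have h2 : t⁻¹ * g ∈ closure ((S : Set G) ∪ T) := by
    have : H ≤ closure ((S : Set G) ∪ T) := by
      rw [← hS]
      exact closure_mono Set.subset_union_left
    exact this hmem
  have := mul_mem h1 h2
  rwa [mul_inv_cancel_left] at this

/-- A finitely generated infinite commutative group surjects onto ℤ. -/
lemma auxSurjOntoInt {B : Type*} [CommGroup B] [Group.FG B] [Infinite B] :
    ∃ f : B →* Multiplicative ℤ, Function.Surjective f := by
  haveI : AddGroup.FG (Additive B) := inferInstance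
  obtain ⟨n, ι, fι, p, hp, e, ⟨eqv⟩⟩ :=
    AddCommGroup.equiv_free_prod_directSum_zmod (Additive B)
  haveI : ∀ i : ι, NeZero (p i ^ e i) :=
    fun i => ⟨pow_ne_zero _ (hp i).pos.ne'⟩
  have hn : n ≠ 0 := by
    rintro rfl
    haveI : Subsingleton (Fin 0 →₀ ℤ) := inferInstance
    haveI : Finite (DirectSum ι fun i => ZMod (p i ^ e i)) :=
      Finite.of_injective (fun x => (fun i => x i : ∀ i, ZMod (p i ^ e i)))
        (fun a b h => DFinsupp.ext (fun i => congrFun h i))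
    haveI : Finite ((Fin 0 →₀ ℤ) × (DirectSum ι fun i => ZMod (p i ^ e i))) := inferInstance
    haveI := Finite.of_equiv _ eqv.toEquiv.symm
    exact not_finite (Additive B)
  let i0 : Fin n := ⟨0, Nat.pos_of_ne_zero hn⟩
  let φ : Additive B →+ ℤ :=
    (Finsupp.applyAddHom i0).comp ((AddMonoidHom.fst _ _).comp eqv.toAddMonoidHom)
  have hφ : Function.Surjective φ := by
    intro k
    refine ⟨eqv.symm (Finsupp.single i0 k, 0), ?_⟩
    simp [φ, Finsupp.single_eq_same]
  refine ⟨MonoidHom.mk' (fun b => Multiplicative.ofAdd (φ (Additive.ofMul b))) ?_, ?_⟩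
  · intro a b
    simp [← ofAdd_add, map_add]
  · intro m
    obtain ⟨a, ha⟩ := hφ (Multiplicative.toAdd m)
    exact ⟨Additive.toMul a, by simp [ha]⟩

/-- A cyclic group is finitely generated. -/
lemma auxFGofCyclic {G : Type*} [Group G] [IsCyclic G] : Group.FG G := by
  obtain ⟨g, hg⟩ := IsCyclic.exists_generator (α := G)
  refine Group.fg_iff.mpr ⟨{g}, ?_, Set.finite_singleton g⟩
  rw [← Subgroup.zpowers_eq_closure, eq_top_iff]
  exact fun x _ => hg x

lemma auxCoeFinOrder {G : Type*} [Group G] {H : Subgroup G} {x : ↥H}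
    (hx : IsOfFinOrder ((x : G))) : IsOfFinOrder x := by
  obtain ⟨k, hk, hxk⟩ := (isOfFinOrder_iff_pow_eq_one).mp hx
  refine (isOfFinOrder_iff_pow_eq_one).mpr ⟨k, hk, ?_⟩
  ext
  push_cast
  simpa using hxk

lemma auxCoeFinOrder' {G : Type*} [Group G] {H : Subgroup G} {x : ↥H}
    (hx : IsOfFinOrder x) : IsOfFinOrder ((x : G)) := by
  obtain ⟨k, hk, hxk⟩ := (isOfFinOrder_iff_pow_eq_one).mp hx
  refine (isOfFinOrder_iff_pow_eq_one).mpr ⟨k, hk, ?_⟩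
  have := congrArg (Subgroup.subtype H) hxk
  simpa using this

/-- Forward direction: a surjection onto ℤ forces an infinite center. -/
lemma auxForward {V : Type*} [Group V] [Infinite V] (hV : VirtuallyCyclic V)
    (f : V →* Multiplicative ℤ) (hf : Function.Surjective f) :
    Infinite (Subgroup.center V) := by
  classical
  set K := f.ker with hK
  haveI hKfin : Finite ↥K := by
    by_contra h
    rw [not_finite_iff_infinite] at h
    haveI := h
    haveI : K.FiniteIndex := auxVCFiniteIndex hV K
    haveI : Finite (V ⧸ K) := K.finite_quotient_of_finiteIndex
    have e := QuotientGroup.quotientKerEquivOfSurjective f hf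
    haveI : Finite (Multiplicative ℤ) := Finite.of_equiv _ e.toEquiv
    exact not_finite (Multiplicative ℤ)
  set C := MonoidHom.ker (MulAut.conjNormal : V →* MulAut ↥K) with hCdef
  haveI : Finite (MulAut ↥K) :=
    Finite.of_injective (fun e : MulAut ↥K => (e : ↥K → ↥K)) DFunLike.coe_injective
  haveI : C.FiniteIndex := inferInstance
  haveI : Infinite ↥C := auxInfiniteSubgroup C
  have hC : ∀ c ∈ C, ∀ x ∈ K, c * x * c⁻¹ = x := by
    intro c hc x hx
    have h1 : MulAut.conjNormal c = (1 : MulAut ↥K) := hc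
    have h2 := congrArg (fun e : MulAut ↥K => ((e ⟨x, hx⟩ : ↥K) : V)) h1
    simpa using h2
  have hex : ∃ z ∈ C, f z ≠ 1 := by
    by_contra h
    push_neg at h
    have hle : C ≤ K := fun c hc => MonoidHom.mem_ker.mpr (h c hc)
    haveI : Finite ↥C :=
      Finite.of_injective (fun c : ↥C => (⟨c, hle c.2⟩ : ↥K))
        (fun a b hab => by ext; simpa using congrArg Subtype.val hab)
    exact not_finite ↥C
  obtain ⟨z, hzC, hz1⟩ := hex
  set n := Nat.card ↥K with hn
  have hn0 : n ≠ 0 := Nat.card_pos.ne'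
  set w := z ^ n with hw
  have hwc : w ∈ Subgroup.center V := by
    rw [Subgroup.mem_center_iff]
    intro v
    set k := v * z * v⁻¹ * z⁻¹ with hk
    have hkK : k ∈ K := by
      have hfk : f k = ⁅f v, f z⁆ := by
        simp [hk, commutatorElement_def, map_mul, map_inv]
      rw [MonoidHom.mem_ker, hfk]
      exact commutatorElement_eq_one_iff_commute.mpr (Commute.all _ _)
    have hcomm : Commute k z := by
      have h1 := hC z hzC k hkK
      have h2 : z * k = k * z := by
        have h3 := congrArg (fun y => y * z) h1
        simpa [mul_assoc] using h3
      exact h2.symm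
    have hkn : k ^ n = 1 := by
      have h4 : (⟨k, hkK⟩ : ↥K) ^ n = 1 := pow_card_eq_one'
      have h5 := congrArg (Subgroup.subtype K) h4
      simpa using h5
    have hvzv : v * z * v⁻¹ = k * z := by
      rw [hk]
      group
    have key : v * w * v⁻¹ = w := by
      have h4 : v * w * v⁻¹ = (v * z * v⁻¹) ^ n := by
        rw [hw, conj_pow]
      rw [h4, hvzv, hcomm.mul_pow, hkn, one_mul]
    have h6 := congrArg (fun y => y * v) key
    simpa [mul_assoc] using h6
  set t : ℤ := Multiplicative.toAdd (f z) with htdef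
  have ht : t ≠ 0 := by
    intro h
    apply hz1
    rw [← ofAdd_toAdd (f z), ← htdef, h]
    rfl
  have key : ∀ m : ℕ, Multiplicative.toAdd (f (w ^ m)) = ((n * m : ℕ) : ℤ) * t := by
    intro m
    rw [hw, ← pow_mul, map_pow, toAdd_pow, htdef, nsmul_eq_mul]
  have hinj : Function.Injective (fun m : ℕ => (⟨w ^ m, (Subgroup.center V).pow_mem hwc m⟩ :
      ↥(Subgroup.center V))) := by
    intro a b hab
    have h1 : w ^ a = w ^ b := congrArg Subtype.val hab
    have h4 : ((n * a : ℕ) : ℤ) * t = ((n * b : ℕ) : ℤ) * t := by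
      rw [← key a, ← key b, h1]
    have h5 := mul_right_cancel₀ ht h4
    have h6 : n * a = n * b := by exact_mod_cast h5
    exact Nat.eq_of_mul_eq_mul_left (Nat.pos_of_ne_zero hn0) h6
  exact Infinite.of_injective _ hinj

/-- Backward direction: an infinite center yields a surjection onto ℤ. -/
lemma auxBackward {V : Type*} [Group V] [Infinite V] (hV : VirtuallyCyclic V)
    (hZ : Infinite (Subgroup.center V)) :
    ∃ f : V →* Multiplicative ℤ, Function.Surjective f := by
  classical
  haveI := hZ
  haveI hZfi : (Subgroup.center V).FiniteIndex := auxVCFiniteIndex hV _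
  obtain ⟨H, hHc, hHfi⟩ := hV
  haveI := hHfi
  haveI := hHc
  haveI : Infinite ↥H := auxInfiniteSubgroup H
  set T : Subgroup ↥H := (Subgroup.center V).subgroupOf H with hT
  haveI : T.FiniteIndex := instFiniteIndex_subgroupOf _ _
  haveI : Infinite ↥T := auxInfiniteSubgroup T
  haveI : IsCyclic ↥T := Subgroup.isCyclic T
  obtain ⟨s, hs⟩ := IsCyclic.exists_generator (α := ↥T)
  have hsord : ¬IsOfFinOrder s := by
    intro hfin
    haveI : Finite (Subgroup.zpowers s) := Set.Finite.to_subtype hfin.finite_zpowers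
    have htop : (⊤ : Subgroup ↥T) = Subgroup.zpowers s :=
      le_antisymm (fun x _ => hs x) le_top
    haveI : Finite (⊤ : Subgroup ↥T) := htop ▸ inferInstance
    haveI : Finite ↥T := Finite.of_equiv _ Subgroup.topEquiv.toEquiv
    exact not_finite ↥T
  set z : V := ((s : ↥H) : V) with hzdef
  have hz : z ∈ Subgroup.center V := (Subgroup.mem_subgroupOf).mp (s : ↥T).2
  have hzord : ¬IsOfFinOrder z := fun h => hsord (auxCoeFinOrder (auxCoeFinOrder h))
  haveI : Group.FG V := auxFGofFiniteIndex H auxFGofCyclic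
  haveI : Group.FG (Abelianization V) :=
    Group.fg_of_surjective (f := Abelianization.of (G := V))
      (fun b => Quotient.inductionOn' b (fun v => ⟨v, rfl⟩))
  haveI : Infinite (Abelianization V) := by
    by_contra hfin
    rw [not_infinite_iff_finite] at hfin
    set τ := MonoidHom.transferCenterPow V with hτ
    set τ' := Abelianization.lift τ with hτ'
    have h1 : IsOfFinOrder (Abelianization.of z) := isOfFinOrder_of_finite _
    have h2 : IsOfFinOrder (τ' (Abelianization.of z)) := τ'.isOfFinOrder h1
    rw [Abelianization.lift_apply_of] at h2
    have h3 : IsOfFinOrder ((τ z : ↥(Subgroup.center V)) : V) := auxCoeFinOrder' h2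
    rw [hτ, MonoidHom.transferCenterPow_apply] at h3
    obtain ⟨k, hk, hzk⟩ := isOfFinOrder_iff_pow_eq_one.mp h3
    apply hzord
    refine isOfFinOrder_iff_pow_eq_one.mpr ⟨(Subgroup.center V).index * k, ?_, ?_⟩
    · exact Nat.mul_pos (Nat.pos_of_ne_zero hZfi.index_ne_zero) hk
    · rw [pow_mul]
      exact hzk
  obtain ⟨g, hg⟩ := auxSurjOntoInt (B := Abelianization V)
  refine ⟨g.comp Abelianization.of, hg.comp (fun b => Quotient.inductionOn' b (fun v => ⟨v, rfl⟩))⟩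

/-- An infinite virtually cyclic group is of type I iff its center is infinite. -/
theorem typeI_iff_infinite_center (V : Type*) [Group V] [Infinite V]
    (hV : VirtuallyCyclic V) :
    IsTypeI V ↔ Infinite (Subgroup.center V) := by
  constructor
  · rintro ⟨f, hf⟩
    exact auxForward hV f hf
  · intro h
    exact auxBackward hV h
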